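/- With β=0, if π* is an optimal non-abstaining policy, then the dynamic value-thresholding policy a(π*) is optimal among all policies over the augmented action space including the abstention token: J(a(π*)) = E_{x∼ρ}[max(r⊥, max_{y} r(x,y))] ≥ J(π†) for every abstention-enabled policy π†. -/

import Mathlib

open Finset

attribute [local instance] Classical.propDecidable

variable {V : Type*}

/-- Expected terminal reward (value function) of policy `π` from state `s`
with `n` generation steps remaining; `e` is the end-of-sequence token and
`r` the terminal reward, collected only when `e` is emitted.  States already
containing `e` are terminal and have value `0`. -/
noncomputable def Vval [Fintype V] (e : V) (r : List V → ℝ)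
    (π : List V → V → ℝ) : ℕ → List V → ℝ
  | 0, _ => 0
  | n+1, s =>
      if e ∈ s then 0 else
      ∑ a : V, π s a * (if a = e then r (s ++ [a]) else Vval e r π n (s ++ [a]))

/-- Value of the dynamic value-thresholding policy `a(π)`: at any
non-terminal state whose value under `π` is below the abstention reward
`rb` it abstains and receives `rb`; otherwise it follows `π`. -/
noncomputable def Aval [Fintype V] (e : V) (r : List V → ℝ)
    (π : List V → V → ℝ) (rb : ℝ) : ℕ → List V → ℝ
  | 0, _ => 0
  | n+1, s =>
      if e ∈ s then 0 else
      if Vval e r π (n+1) s < rb then rb else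
      ∑ a : V, π s a * (if a = e then r (s ++ [a]) else Aval e r π rb n (s ++ [a]))

/-- One generation step with positive probability from a non-terminal state. -/
def Step (e : V) (π : List V → V → ℝ) (s s' : List V) : Prop :=
  e ∉ s ∧ ∃ a : V, 0 < π s a ∧ s' = s ++ [a]

/-- `s'` is reachable from `s` with positive probability under `π`. -/
def Reach (e : V) (π : List V → V → ℝ) : List V → List V → Prop :=
  Relation.ReflTransGen (Step e π)

/-- Maximum terminal reward achievable from state `s` with `n` steps
remaining (over all completions extending `s`). -/
noncomputable def Mval [Fintype V] (e : V) (r : List V → ℝ) : ℕ → List V → ℝ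
  | 0, _ => 0
  | n+1, s =>
      if e ∈ s then 0 else
      ⨆ a : V, (if a = e then r (s ++ [a]) else Mval e r n (s ++ [a]))

/-- Value of an abstention-enabled policy over the augmented action space
`V ∪ {⊥}` (the abstention action is `none`): abstaining terminates the
trajectory with reward `rb`. -/
noncomputable def Dval [Fintype V] (e : V) (r : List V → ℝ) (rb : ℝ)
    (π : List V → Option V → ℝ) : ℕ → List V → ℝ
  | 0, _ => 0
  | n+1, s =>
      if e ∈ s then 0 else
      π s none * rb +
        ∑ a : V, π s (some a) *
          (if a = e then r (s ++ [a]) else Dval e r rb π n (s ++ [a]))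


section Aux
variable [Fintype V]

noncomputable def gact [Nonempty V] (f : V → ℝ) : V :=
  Classical.choose (Finite.exists_max f)

lemma gact_spec [Nonempty V] (f : V → ℝ) : ∀ b, f b ≤ f (gact f) :=
  Classical.choose_spec (Finite.exists_max f)

lemma ciSup_eq_gact [Nonempty V] (f : V → ℝ) : (⨆ a, f a) = f (gact f) :=
  le_antisymm (ciSup_le (gact_spec f)) (le_ciSup (Set.finite_range f).bddAbove _)

lemma le_csup [Nonempty V] (f : V → ℝ) (a : V) : f a ≤ ⨆ b, f b :=
  le_ciSup (Set.finite_range f).bddAbove a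

/-- Vval ≤ Mval. -/
lemma vle (e : V) (r : List V → ℝ) (π : List V → V → ℝ)
    (hπ0 : ∀ s a, 0 ≤ π s a) (hπ1 : ∀ s, ∑ a : V, π s a = 1) :
    ∀ n s, Vval e r π n s ≤ Mval e r n s := by
  haveI : Nonempty V := ⟨e⟩
  intro n
  induction n with
  | zero => intro s; simp [Vval, Mval]
  | succ n ih =>
    intro s
    simp only [Vval, Mval]
    by_cases hs : e ∈ s
    · simp [hs]
    · simp only [if_neg hs]
      calc ∑ a : V, π s a * (if a = e then r (s ++ [a]) else Vval e r π n (s ++ [a]))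
          ≤ ∑ a : V, π s a * (⨆ b : V, (if b = e then r (s ++ [b]) else Mval e r n (s ++ [b]))) := by
            apply Finset.sum_le_sum
            intro a _
            apply mul_le_mul_of_nonneg_left _ (hπ0 s a)
            refine le_trans ?_ (le_csup _ a)
            by_cases ha : a = e
            · simp [ha]
            · simp [ha, ih]
        _ = ⨆ b : V, (if b = e then r (s ++ [b]) else Mval e r n (s ++ [b])) := by
            rw [← Finset.sum_mul, hπ1, one_mul]

/-- Greedy policy achieving Mval. -/
noncomputable def greedy (e : V) (r : List V → ℝ) (T : ℕ) : List V → V → ℝ :=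
  fun s a =>
    haveI : Nonempty V := ⟨e⟩
    if a = gact (fun b => if b = e then r (s ++ [b]) else
        Mval e r (T - s.length - 1) (s ++ [b])) then 1 else 0

lemma greedy_nonneg (e : V) (r : List V → ℝ) (T : ℕ) :
    ∀ s a, 0 ≤ greedy e r T s a := by
  intro s a; unfold greedy; split <;> norm_num

lemma greedy_sum (e : V) (r : List V → ℝ) (T : ℕ) :
    ∀ s, ∑ a : V, greedy e r T s a = 1 := by
  intro s; unfold greedy; simp

lemma greedy_achieves (e : V) (r : List V → ℝ) (T : ℕ) :
    ∀ n s, n + s.length = T → Vval e r (greedy e r T) n s = Mval e r n s := by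
  haveI : Nonempty V := ⟨e⟩
  intro n
  induction n with
  | zero => intro s _; simp [Vval, Mval]
  | succ n ih =>
    intro s hlen
    simp only [Vval, Mval]
    by_cases hs : e ∈ s
    · simp [hs]
    · simp only [if_neg hs]
      set f : V → ℝ := fun b => if b = e then r (s ++ [b]) else
        Mval e r (T - s.length - 1) (s ++ [b]) with hf
      have hn : T - s.length - 1 = n := by omega
      have hsum : ∑ a : V, greedy e r T s a *
          (if a = e then r (s ++ [a]) else Vval e r (greedy e r T) n (s ++ [a]))
          = (if gact f = e then r (s ++ [gact f]) else
              Vval e r (greedy e r T) n (s ++ [gact f])) := by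
        rw [Finset.sum_eq_single (gact f)]
        · simp [greedy, hf]
        · intro b _ hb; simp [greedy, hf, show ¬ (b = gact (fun b => if b = e then r (s ++ [b]) else Mval e r (T - s.length - 1) (s ++ [b]))) from hb]
        · simp
      rw [hn] at hf
      rw [hsum, ciSup_eq_gact, ← hf]
      by_cases hg : gact f = e
      · rw [if_pos hg, if_pos hg]
      · rw [if_neg hg, if_neg hg, ih (s ++ [gact f]) (by simp; omega)]

/-- Convex-combination equality forces pointwise equality on the support. -/
lemma conv_eq {ι : Type*} (t : Finset ι) (w g : ι → ℝ) (M : ℝ)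
    (hw : ∀ i ∈ t, 0 ≤ w i) (h1 : ∑ i ∈ t, w i = 1)
    (hg : ∀ i ∈ t, g i ≤ M) (he : ∑ i ∈ t, w i * g i = M) :
    ∀ i ∈ t, 0 < w i → g i = M := by
  have hz : ∑ i ∈ t, w i * (M - g i) = 0 := by
    simp only [mul_sub]
    rw [Finset.sum_sub_distrib, ← Finset.sum_mul, h1, one_mul, he, sub_self]
  have := (Finset.sum_eq_zero_iff_of_nonneg (fun i hi =>
    mul_nonneg (hw i hi) (sub_nonneg.mpr (hg i hi)))).mp hz
  intro i hi hwi
  have h0 := this i hi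
  have : M - g i = 0 := by
    rcases mul_eq_zero.mp h0 with h | h
    · exact absurd h (ne_of_gt hwi)
    · exact h
  linarith

/-- If `π` is value-optimal at `s` and the value clears the threshold,
then `a(π)` achieves `Mval`. -/
lemma aval_eq (e : V) (r : List V → ℝ) (π : List V → V → ℝ) (rb : ℝ)
    (hπ0 : ∀ s a, 0 ≤ π s a) (hπ1 : ∀ s, ∑ a : V, π s a = 1) (hrb0 : 0 < rb) :
    ∀ n s, e ∉ s → Vval e r π n s = Mval e r n s → rb ≤ Mval e r n s →
      Aval e r π rb n s = Mval e r n s := by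
  haveI : Nonempty V := ⟨e⟩
  intro n
  induction n with
  | zero =>
    intro s _ _ hle
    simp only [Mval] at hle
    linarith
  | succ n ih =>
    intro s hs hV hle
    set M : ℝ := Mval e r (n+1) s with hM
    set g : V → ℝ := fun a => if a = e then r (s ++ [a]) else Vval e r π n (s ++ [a]) with hg
    have hgle : ∀ a : V, a ∈ Finset.univ → g a ≤ M := by
      intro a _
      have h1 : g a ≤ (if a = e then r (s ++ [a]) else Mval e r n (s ++ [a])) := by
        by_cases ha : a = e
        · simp [hg, ha]
        · simp [hg, ha, vle e r π hπ0 hπ1]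
      refine h1.trans ?_
      have := le_csup (fun b : V => if b = e then r (s ++ [b]) else Mval e r n (s ++ [b])) a
      simp only [hM, Mval, if_neg hs]
      exact this
    have hVs : ∑ a : V, π s a * g a = M := by
      rw [← hV]; simp only [Vval, if_neg hs, hg]
    have hsupp := conv_eq Finset.univ (π s) g M (fun a _ => hπ0 s a) (hπ1 s) hgle hVs
    simp only [Aval, if_neg hs]
    rw [if_neg (by rw [hV]; exact not_lt.mpr hle)]
    have : ∀ a : V, π s a * (if a = e then r (s ++ [a]) else Aval e r π rb n (s ++ [a]))
        = π s a * M := by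
      intro a
      rcases (hπ0 s a).lt_or_eq with hpos | h0
      · have hga := hsupp a (Finset.mem_univ a) hpos
        by_cases ha : a = e
        · simp only [if_pos ha]
          have : g a = r (s ++ [a]) := by simp [hg, ha]
          rw [← this, hga]
        · simp only [if_neg ha]
          have hVa : Vval e r π n (s ++ [a]) = M := by
            have : g a = Vval e r π n (s ++ [a]) := by simp [hg, ha]
            rw [← this, hga]
          have hMa : Mval e r n (s ++ [a]) ≤ M := by
            have := le_csup (fun b : V => if b = e then r (s ++ [b]) else Mval e r n (s ++ [b])) a
            simp only [if_neg ha] at this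
            simpa only [hM, Mval, if_neg hs] using this
          have hVaM : Vval e r π n (s ++ [a]) = Mval e r n (s ++ [a]) := by
            have := vle e r π hπ0 hπ1 n (s ++ [a])
            linarith
          have hMaM : Mval e r n (s ++ [a]) = M := by
            rw [← hVaM, hVa]
          have hes : e ∉ s ++ [a] := by
            intro h
            rcases List.mem_append.mp h with h | h
            · exact hs h
            · exact ha (List.mem_singleton.mp h).symm
          rw [ih (s ++ [a]) hes hVaM (by rw [hMaM]; exact hle), hMaM]
      · rw [← h0]; ring
    rw [Finset.sum_congr rfl (fun a _ => this a), ← Finset.sum_mul, hπ1, one_mul]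

/-- Any abstention-enabled policy is bounded by `max rb Mval`. -/
lemma dle (e : V) (r : List V → ℝ) (rb : ℝ) (πd : List V → Option V → ℝ)
    (h0 : ∀ s o, 0 ≤ πd s o) (h1 : ∀ s, ∑ o : Option V, πd s o = 1)
    (hrb0 : 0 < rb) :
    ∀ n s, Dval e r rb πd n s ≤ max rb (Mval e r n s) := by
  haveI : Nonempty V := ⟨e⟩
  intro n
  induction n with
  | zero => intro s; simp only [Dval, Mval]; exact le_max_of_le_left hrb0.le
  | succ n ih =>
    intro s
    simp only [Dval]
    by_cases hs : e ∈ s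
    · simp only [if_pos hs]; exact le_max_of_le_left hrb0.le
    · simp only [if_neg hs]
      set M : ℝ := max rb (Mval e r (n+1) s) with hM
      have hMsup : ∀ a : V, (if a = e then r (s ++ [a]) else Mval e r n (s ++ [a]))
          ≤ Mval e r (n+1) s := by
        intro a
        have := le_csup (fun b : V => if b = e then r (s ++ [b]) else Mval e r n (s ++ [b])) a
        simpa only [Mval, if_neg hs] using this
      have key : ∀ a : V, πd s (some a) *
          (if a = e then r (s ++ [a]) else Dval e r rb πd n (s ++ [a]))
          ≤ πd s (some a) * M := by
        intro a
        apply mul_le_mul_of_nonneg_left _ (h0 s (some a))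
        by_cases ha : a = e
        · simp only [if_pos ha]
          exact le_max_of_le_right (by simpa [ha] using hMsup a)
        · simp only [if_neg ha]
          refine (ih (s ++ [a])).trans (max_le (le_max_left _ _) ?_)
          exact le_max_of_le_right (by simpa [ha] using hMsup a)
      calc πd s none * rb + ∑ a : V, πd s (some a) *
            (if a = e then r (s ++ [a]) else Dval e r rb πd n (s ++ [a]))
          ≤ πd s none * M + ∑ a : V, πd s (some a) * M := by
            apply add_le_add
            · exact mul_le_mul_of_nonneg_left (le_max_left _ _) (h0 s none)
            · exact Finset.sum_le_sum (fun a _ => key a)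
        _ = (∑ o : Option V, πd s o) * M := by
            rw [Fintype.sum_option, add_mul, Finset.sum_mul]
        _ = M := by rw [h1, one_mul]

end Aux

/-- Optimality of dynamic abstention (Proposition 4.7): with `β = 0`, if
`π*` is optimal among non-abstaining policies, then `a(π*)` achieves
`J(a(π*)) = E_{x∼ρ}[max(r⊥, max_y r(x,y))]` and dominates every
abstention-enabled policy. -/
theorem optimality_of_dynamic_abstention [Fintype V] {X : Type*} [Fintype X]
    (e : V) (ρ : X → ℝ) (r : X → List V → ℝ)
    (πstar : X → List V → V → ℝ) (rb : ℝ) (T : ℕ)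
    (hρ0 : ∀ x, 0 ≤ ρ x) (hρ1 : ∑ x, ρ x = 1)
    (hπ0 : ∀ x s a, 0 ≤ πstar x s a) (hπ1 : ∀ x s, ∑ a : V, πstar x s a = 1)
    (hr : ∀ x y, r x y ∈ Set.Icc (0:ℝ) 1)
    (hrb0 : 0 < rb) (hrb1 : rb ≤ 1) (hT : 1 ≤ T)
    (hopt : ∀ π' : X → List V → V → ℝ,
        (∀ x s a, 0 ≤ π' x s a) → (∀ x s, ∑ a : V, π' x s a = 1) →
        (∑ x, ρ x * Vval e (r x) (π' x) T []) ≤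
          ∑ x, ρ x * Vval e (r x) (πstar x) T []) :
    (∑ x, ρ x * Aval e (r x) (πstar x) rb T [])
        = (∑ x, ρ x * max rb (Mval e (r x) T [])) ∧
    ∀ πd : X → List V → Option V → ℝ,
      (∀ x s o, 0 ≤ πd x s o) → (∀ x s, ∑ o : Option V, πd x s o = 1) →
      (∑ x, ρ x * Dval e (r x) rb (πd x) T []) ≤
        ∑ x, ρ x * Aval e (r x) (πstar x) rb T [] := by
  haveI : Nonempty V := ⟨e⟩
  obtain ⟨m, rfl⟩ : ∃ m, T = m + 1 := ⟨T - 1, by omega⟩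
  set T := m + 1
  -- per-x optimality at the root
  have hVleM : ∀ x, Vval e (r x) (πstar x) T [] ≤ Mval e (r x) T [] :=
    fun x => vle e (r x) (πstar x) (hπ0 x) (hπ1 x) T []
  have hMleV : ∑ x, ρ x * Mval e (r x) T [] ≤ ∑ x, ρ x * Vval e (r x) (πstar x) T [] := by
    have h := hopt (fun x => greedy e (r x) T)
      (fun x => greedy_nonneg e (r x) T) (fun x => greedy_sum e (r x) T)
    calc ∑ x, ρ x * Mval e (r x) T []
        = ∑ x, ρ x * Vval e (r x) (greedy e (r x) T) T [] := by
          refine Finset.sum_congr rfl (fun x _ => ?_)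
          rw [greedy_achieves e (r x) T T [] (by simp)]
      _ ≤ _ := h
  have heq : ∀ x, ρ x * Vval e (r x) (πstar x) T [] = ρ x * Mval e (r x) T [] := by
    have hz : ∑ x, (ρ x * Mval e (r x) T [] - ρ x * Vval e (r x) (πstar x) T []) = 0 := by
      rw [Finset.sum_sub_distrib]
      have := Finset.sum_le_sum (fun x (_ : x ∈ Finset.univ) =>
        mul_le_mul_of_nonneg_left (hVleM x) (hρ0 x))
      linarith
    have := (Finset.sum_eq_zero_iff_of_nonneg (fun x (_ : x ∈ Finset.univ) =>
      sub_nonneg.mpr (mul_le_mul_of_nonneg_left (hVleM x) (hρ0 x)))).mp hz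
    intro x
    have := this x (Finset.mem_univ x)
    linarith
  -- part 1
  have part1 : ∑ x, ρ x * Aval e (r x) (πstar x) rb T []
      = ∑ x, ρ x * max rb (Mval e (r x) T []) := by
    refine Finset.sum_congr rfl (fun x _ => ?_)
    rcases (hρ0 x).lt_or_eq with hx | hx
    · have hVeq : Vval e (r x) (πstar x) T [] = Mval e (r x) T [] :=
        mul_left_cancel₀ (ne_of_gt hx) (heq x)
      by_cases hcmp : rb ≤ Mval e (r x) T []
      · rw [aval_eq e (r x) (πstar x) rb (hπ0 x) (hπ1 x) hrb0 T []
          (show e ∉ [] from List.not_mem_nil) hVeq hcmp, max_eq_right hcmp]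
      · push_neg at hcmp
        have hA : Aval e (r x) (πstar x) rb T [] = rb := by
          show Aval e (r x) (πstar x) rb (m+1) [] = rb
          simp only [Aval, if_neg (show e ∉ [] from List.not_mem_nil)]
          rw [if_pos (by rw [hVeq]; exact hcmp)]
        rw [hA, max_eq_left hcmp.le]
    · rw [← hx]; ring
  refine ⟨part1, fun πd hd0 hd1 => ?_⟩
  rw [part1]
  refine Finset.sum_le_sum (fun x _ => ?_)
  exact mul_le_mul_of_nonneg_left
    (dle e (r x) rb (πd x) (hd0 x) (hd1 x) hrb0 T []) (hρ0 x)
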